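/- For all real x with 0 < x < π/2, the following double inequality holds: (2 + cos x)/3 − (2/3 − 2/π)·Ψ₁(x) < (sin x)/x < (2 + cos x)/3 − (2/3 − 2/π)·Ψ₂(x). -/

import Mathlib

open Real

set_option maxHeartbeats 1600000

/-- If `F 0 = 0` and `F` has nonnegative derivative on `[0,∞)`, then `F x ≥ 0` for `x ≥ 0`. -/
lemma chr_nonneg_of_deriv_nonneg (F F' : ℝ → ℝ) (hd : ∀ t, HasDerivAt F (F' t) t)
    (h0 : F 0 = 0) (hF' : ∀ t, 0 ≤ t → 0 ≤ F' t) : ∀ x, 0 ≤ x → 0 ≤ F x := by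
  intro x hx
  have hmono : MonotoneOn F (Set.Ici 0) := by
    apply monotoneOn_of_deriv_nonneg (convex_Ici 0)
    · exact (Differentiable.continuous (fun t => (hd t).differentiableAt)).continuousOn
    · intro t _
      exact (hd t).differentiableAt.differentiableWithinAt
    · intro t ht
      rw [interior_Ici] at ht
      rw [(hd t).deriv]
      exact hF' t ht.le
  have := hmono (Set.self_mem_Ici) (Set.mem_Ici.2 hx) hx
  linarith [h0 ▸ this]

lemma chr_sin_ge2 (x : ℝ) (hx : 0 ≤ x) : x - x^3/6 ≤ sin x := by
  have := chr_nonneg_of_deriv_nonneg (fun t => sin t - (t - t^3/6))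
    (fun t => cos t - (1 - t^2/2))
    (fun t => by
      have h1 : HasDerivAt (fun t : ℝ => t - t^3/6) (1 - t^2/2) t := by
        have h2 := (hasDerivAt_id t).sub ((hasDerivAt_pow 3 t).div_const 6)
        exact h2.congr_deriv (by ring)
      exact (Real.hasDerivAt_sin t).sub h1)
    (by norm_num)
    (fun t ht => by have := Real.one_sub_sq_div_two_le_cos (x := t); simp; linarith)
    x hx
  linarith

lemma chr_cos_le4 (x : ℝ) (hx : 0 ≤ x) : cos x ≤ 1 - x^2/2 + x^4/24 := by
  have := chr_nonneg_of_deriv_nonneg (fun t => (1 - t^2/2 + t^4/24) - cos t)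
    (fun t => sin t - (t - t^3/6))
    (fun t => by
      have h1 : HasDerivAt (fun t : ℝ => 1 - t^2/2 + t^4/24) (-(t - t^3/6) ) t := by
        have h2 := ((hasDerivAt_const t (1:ℝ)).sub ((hasDerivAt_pow 2 t).div_const 2)).add
          ((hasDerivAt_pow 4 t).div_const 24)
        exact h2.congr_deriv (by ring)
      have := h1.sub (Real.hasDerivAt_cos t)
      exact this.congr_deriv (by (try simp only [id_eq, Pi.add_apply]); ring1))
    (by norm_num)
    (fun t ht => by have := chr_sin_ge2 t ht; simp; linarith)
    x hx
  linarith

lemma chr_sin_le5 (x : ℝ) (hx : 0 ≤ x) : sin x ≤ x - x^3/6 + x^5/120 := by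
  have := chr_nonneg_of_deriv_nonneg (fun t => (t - t^3/6 + t^5/120) - sin t)
    (fun t => (1 - t^2/2 + t^4/24) - cos t)
    (fun t => by
      have h1 : HasDerivAt (fun t : ℝ => t - t^3/6 + t^5/120) (1 - t^2/2 + t^4/24) t := by
        have h2 := ((hasDerivAt_id t).sub ((hasDerivAt_pow 3 t).div_const 6)).add
          ((hasDerivAt_pow 5 t).div_const 120)
        exact h2.congr_deriv (by ring)
      exact h1.sub (Real.hasDerivAt_sin t))
    (by norm_num)
    (fun t ht => by have := chr_cos_le4 t ht; simp; linarith)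
    x hx
  linarith

lemma chr_cos_ge6 (x : ℝ) (hx : 0 ≤ x) : 1 - x^2/2 + x^4/24 - x^6/720 ≤ cos x := by
  have := chr_nonneg_of_deriv_nonneg (fun t => cos t - (1 - t^2/2 + t^4/24 - t^6/720))
    (fun t => (t - t^3/6 + t^5/120) - sin t)
    (fun t => by
      have h1 : HasDerivAt (fun t : ℝ => 1 - t^2/2 + t^4/24 - t^6/720)
          (-(t - t^3/6 + t^5/120)) t := by
        have h2 := (((hasDerivAt_const t (1:ℝ)).sub ((hasDerivAt_pow 2 t).div_const 2)).add
          ((hasDerivAt_pow 4 t).div_const 24)).sub ((hasDerivAt_pow 6 t).div_const 720)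
        exact h2.congr_deriv (by ring)
      have := (Real.hasDerivAt_cos t).sub h1
      exact this.congr_deriv (by (try simp only [id_eq, Pi.add_apply]); ring1))
    (by norm_num)
    (fun t ht => by have := chr_sin_le5 t ht; simp; linarith)
    x hx
  linarith

lemma chr_sin_ge7 (x : ℝ) (hx : 0 ≤ x) : x - x^3/6 + x^5/120 - x^7/5040 ≤ sin x := by
  have := chr_nonneg_of_deriv_nonneg (fun t => sin t - (t - t^3/6 + t^5/120 - t^7/5040))
    (fun t => cos t - (1 - t^2/2 + t^4/24 - t^6/720))
    (fun t => by
      have h1 : HasDerivAt (fun t : ℝ => t - t^3/6 + t^5/120 - t^7/5040)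
          (1 - t^2/2 + t^4/24 - t^6/720) t := by
        have h2 := (((hasDerivAt_id t).sub ((hasDerivAt_pow 3 t).div_const 6)).add
          ((hasDerivAt_pow 5 t).div_const 120)).sub ((hasDerivAt_pow 7 t).div_const 5040)
        exact h2.congr_deriv (by ring)
      exact (Real.hasDerivAt_sin t).sub h1)
    (by norm_num)
    (fun t ht => by have := chr_cos_ge6 t ht; simp; linarith)
    x hx
  linarith

lemma chr_cos_le8 (x : ℝ) (hx : 0 ≤ x) : cos x ≤ 1 - x^2/2 + x^4/24 - x^6/720 + x^8/40320 := by
  have := chr_nonneg_of_deriv_nonneg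
    (fun t => (1 - t^2/2 + t^4/24 - t^6/720 + t^8/40320) - cos t)
    (fun t => sin t - (t - t^3/6 + t^5/120 - t^7/5040))
    (fun t => by
      have h1 : HasDerivAt (fun t : ℝ => 1 - t^2/2 + t^4/24 - t^6/720 + t^8/40320)
          (-(t - t^3/6 + t^5/120 - t^7/5040)) t := by
        have h2 := ((((hasDerivAt_const t (1:ℝ)).sub ((hasDerivAt_pow 2 t).div_const 2)).add
          ((hasDerivAt_pow 4 t).div_const 24)).sub ((hasDerivAt_pow 6 t).div_const 720)).add
          ((hasDerivAt_pow 8 t).div_const 40320)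
        exact h2.congr_deriv (by ring)
      have := h1.sub (Real.hasDerivAt_cos t)
      exact this.congr_deriv (by (try simp only [id_eq, Pi.add_apply]); ring1))
    (by norm_num)
    (fun t ht => by have := chr_sin_ge7 t ht; simp; linarith)
    x hx
  linarith

/-- Derivative of the function behind the left inequality. -/
lemma chr_hasDerivAt_P (p : ℝ) (t : ℝ) :
    HasDerivAt (fun t : ℝ => 3*p*sin t - p*t*(2+cos t) + (2*p-6)*(t*(sin t - t*cos t)))
      (2*p*cos t - 2*p + p*t*sin t + (2*p-6)*(sin t - t*cos t + t^2*sin t)) t := by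
  have hpsi : HasDerivAt (fun t : ℝ => sin t - t*cos t) (t*sin t) t := by
    have := (Real.hasDerivAt_sin t).sub ((hasDerivAt_id t).mul (Real.hasDerivAt_cos t))
    exact this.congr_deriv (by (try simp only [id_eq, Pi.add_apply]); ring1)
  have h1 : HasDerivAt (fun t : ℝ => 3*p*sin t) (3*p*cos t) t :=
    (Real.hasDerivAt_sin t).const_mul (3*p)
  have h2 : HasDerivAt (fun t : ℝ => p*t*(2+cos t))
      (p*(2+cos t) + (p*t)*(-sin t)) t := by
    have := ((hasDerivAt_id t).const_mul p).mul ((hasDerivAt_const t (2:ℝ)).add (Real.hasDerivAt_cos t))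
    exact this.congr_deriv (by (try simp only [id_eq, Pi.add_apply]); ring1)
  have h3 : HasDerivAt (fun t : ℝ => (2*p-6)*(t*(sin t - t*cos t)))
      ((2*p-6)*((sin t - t*cos t) + t*(t*sin t))) t := by
    have := ((hasDerivAt_id t).mul hpsi).const_mul (2*p-6)
    exact this.congr_deriv (by (try simp only [id_eq, Pi.add_apply]); ring1)
  have := (h1.sub h2).add h3
  exact this.congr_deriv (by (try simp only [id_eq, Pi.add_apply]); ring1)

/-- Derivative of the function behind the right inequality. -/
lemma chr_hasDerivAt_Q (p : ℝ) (t : ℝ) :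
    HasDerivAt (fun t : ℝ => p*t*(2+cos t) - 3*p*sin t - (2*p-6)*(t*(sin t - t*cos t)^2))
      (2*p - 2*p*cos t - p*t*sin t
        - (2*p-6)*((sin t - t*cos t)^2 + 2*t^2*sin t*(sin t - t*cos t))) t := by
  have hpsi : HasDerivAt (fun t : ℝ => sin t - t*cos t) (t*sin t) t := by
    have := (Real.hasDerivAt_sin t).sub ((hasDerivAt_id t).mul (Real.hasDerivAt_cos t))
    exact this.congr_deriv (by (try simp only [id_eq, Pi.add_apply]); ring1)
  have h2 : HasDerivAt (fun t : ℝ => p*t*(2+cos t))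
      (p*(2+cos t) + (p*t)*(-sin t)) t := by
    have := ((hasDerivAt_id t).const_mul p).mul ((hasDerivAt_const t (2:ℝ)).add (Real.hasDerivAt_cos t))
    exact this.congr_deriv (by (try simp only [id_eq, Pi.add_apply]); ring1)
  have h1 : HasDerivAt (fun t : ℝ => 3*p*sin t) (3*p*cos t) t :=
    (Real.hasDerivAt_sin t).const_mul (3*p)
  have h3 : HasDerivAt (fun t : ℝ => (2*p-6)*(t*(sin t - t*cos t)^2))
      ((2*p-6)*((sin t - t*cos t)^2 + t*(2*(sin t - t*cos t)*(t*sin t)))) t := by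
    have hsq : HasDerivAt (fun t : ℝ => (sin t - t*cos t)^2)
        (2*(sin t - t*cos t)*(t*sin t)) t := by
      have := hpsi.pow 2
      exact this.congr_deriv (by (try simp only [id_eq, Pi.add_apply]); ring1)
    have := ((hasDerivAt_id t).mul hsq).const_mul (2*p-6)
    exact this.congr_deriv (by (try simp only [id_eq, Pi.add_apply]); ring1)
  have := (h2.sub h1).sub h3
  exact this.congr_deriv (by (try simp only [id_eq, Pi.add_apply]); ring1)

-- Polynomial negativity lemmas for the derivative of P on [1.3, π/2)
lemma chr_UP_neg (t : ℝ) (h1 : 1.3 ≤ t) (h2 : t ≤ 1.5707965) (p : ℝ)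
    (hp1 : 3.141592 < p) (hp2 : p < 3.141593) :
    2*p*(1 - t^2/2 + t^4/24 - t^6/720 + t^8/40320) - 2*p + p*t*(t - t^3/6 + t^5/120)
     + (2*p-6)*((t - t^3/6 + t^5/120) - t*(1 - t^2/2 + t^4/24 - t^6/720 + t^8/40320)
        + t^2*(t - t^3/6 + t^5/120)) < 0 := by
  have ht0 : (0:ℝ) ≤ t := by linarith
  rcases le_or_gt t 1.45 with h | h
  · have lo : ∀ k : ℕ, (1.3:ℝ)^k ≤ t^k := fun k => pow_le_pow_left₀ (by norm_num) h1 k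
    have hi : ∀ k : ℕ, t^k ≤ (1.45:ℝ)^k := fun k => pow_le_pow_left₀ ht0 h k
    nlinarith [lo 2, hi 2, lo 3, hi 3, lo 4, hi 4, lo 5, hi 5, lo 6, hi 6, lo 7, hi 7,
      lo 8, hi 8, lo 9, hi 9]
  · have lo : ∀ k : ℕ, (1.45:ℝ)^k ≤ t^k := fun k => pow_le_pow_left₀ (by norm_num) h.le k
    have hi : ∀ k : ℕ, t^k ≤ (1.5707965:ℝ)^k := fun k => pow_le_pow_left₀ ht0 h2 k
    nlinarith [lo 2, hi 2, lo 3, hi 3, lo 4, hi 4, lo 5, hi 5, lo 6, hi 6, lo 7, hi 7,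
      lo 8, hi 8, lo 9, hi 9]

-- Polynomial negativity for the derivative of Q, in the variable u = t^2
lemma chr_VQ_neg (u : ℝ) (h1 : 1.96 ≤ u) (h2 : u ≤ 2.4674019) (p : ℝ)
    (hp1 : 3.141592 < p) (hp2 : p < 3.141593) :
    2*p - 2*p*(1 - u/2 + u^2/24 - u^3/720) - p*(u - u^2/6 + u^3/120 - u^4/5040)
     - (2*p-6)*( u*(u/3 - u^2/30 - u^3/5040)^2
        + 2*u^2*(1 - u/6 + u^2/120 - u^3/5040)*(u/3 - u^2/30 - u^3/5040) ) < 0 := by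
  have ht0 : (0:ℝ) ≤ u := by linarith
  rcases le_or_gt u 2.2 with h | h
  · have lo : ∀ k : ℕ, (1.96:ℝ)^k ≤ u^k := fun k => pow_le_pow_left₀ (by norm_num) h1 k
    have hi : ∀ k : ℕ, u^k ≤ (2.2:ℝ)^k := fun k => pow_le_pow_left₀ ht0 h k
    nlinarith [lo 2, hi 2, lo 3, hi 3, lo 4, hi 4, lo 5, hi 5, lo 6, hi 6, lo 7, hi 7, lo 8, hi 8]
  · have lo : ∀ k : ℕ, (2.2:ℝ)^k ≤ u^k := fun k => pow_le_pow_left₀ (by norm_num) h.le k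
    have hi : ∀ k : ℕ, u^k ≤ (2.4674019:ℝ)^k := fun k => pow_le_pow_left₀ ht0 h2 k
    nlinarith [lo 2, hi 2, lo 3, hi 3, lo 4, hi 4, lo 5, hi 5, lo 6, hi 6, lo 7, hi 7, lo 8, hi 8]

-- Positivity of P on (0, π/2)
lemma chr_P_pos (x : ℝ) (hx : 0 < x) (hx' : x < π/2) :
    0 < 3*π*sin x - π*x*(2+cos x) + (2*π-6)*(x*(sin x - x*cos x)) := by
  have hp1 : 3.141592 < π := pi_gt_d6
  have hp2 : π < 3.141593 := pi_lt_d6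
  rcases le_or_gt x 1.3 with hc | hc
  · -- direct Taylor estimate
    have hs := chr_sin_ge7 x hx.le
    have hcos := chr_cos_le4 x hx.le
    have hinner : 0 < (2*π-6)/3 - π*x/60 - (2*π-6)*x^2/30 - π*x^3/1680 - (2*π-6)*x^4/5040 := by
      have hi : ∀ k : ℕ, x^k ≤ (1.3:ℝ)^k := fun k => pow_le_pow_left₀ hx.le hc k
      nlinarith [hi 2, hi 3, hi 4, hx]
    have hfac : 0 < x^4 * ((2*π-6)/3 - π*x/60 - (2*π-6)*x^2/30 - π*x^3/1680 - (2*π-6)*x^4/5040) :=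
      mul_pos (pow_pos hx 4) hinner
    nlinarith [hfac,
      mul_nonneg (show (0:ℝ) ≤ 3*π + (2*π-6)*x by nlinarith)
        (sub_nonneg.2 hs),
      mul_nonneg (show (0:ℝ) ≤ π*x + (2*π-6)*x^2 by nlinarith)
        (sub_nonneg.2 hcos)]
  · -- antitone on [1.3, π/2], vanishing at π/2
    have h13 : (1.3:ℝ) ≤ π/2 := by linarith
    have hanti : StrictAntiOn
        (fun t : ℝ => 3*π*sin t - π*t*(2+cos t) + (2*π-6)*(t*(sin t - t*cos t)))
        (Set.Icc 1.3 (π/2)) := by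
      apply strictAntiOn_of_deriv_neg (convex_Icc _ _)
      · apply Continuous.continuousOn
        fun_prop
      · intro t ht
        rw [interior_Icc] at ht
        rw [(chr_hasDerivAt_P π t).deriv]
        have ht1 : 1.3 < t := ht.1
        have ht2 : t ≤ 1.5707965 := by linarith [ht.2]
        have ht0 : (0:ℝ) ≤ t := by linarith
        have hs5 := chr_sin_le5 t ht0
        have hc8 := chr_cos_le8 t ht0
        have hup := chr_UP_neg t ht1.le ht2 π hp1 hp2
        nlinarith [hup,
          mul_nonneg (show (0:ℝ) ≤ 2*π - (2*π-6)*t by nlinarith)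
            (sub_nonneg.2 hc8),
          mul_nonneg (show (0:ℝ) ≤ π*t + (2*π-6)*(1+t^2) by nlinarith)
            (sub_nonneg.2 hs5)]
    have hend : (3*π*sin (π/2) - π*(π/2)*(2+cos (π/2))
        + (2*π-6)*((π/2)*(sin (π/2) - (π/2)*cos (π/2)))) = 0 := by
      rw [Real.sin_pi_div_two, Real.cos_pi_div_two]; ring
    have := hanti (Set.mem_Icc.2 ⟨hc.le, hx'.le⟩) (Set.mem_Icc.2 ⟨h13, le_refl _⟩) hx'
    simp only at this
    linarith [hend ▸ this]

-- Positivity of Q on (0, π/2)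
lemma chr_Q_pos (x : ℝ) (hx : 0 < x) (hx' : x < π/2) :
    0 < π*x*(2+cos x) - 3*π*sin x - (2*π-6)*(x*(sin x - x*cos x)^2) := by
  have hp1 : 3.141592 < π := pi_gt_d6
  have hp2 : π < 3.141593 := pi_lt_d6
  rcases le_or_gt x 1.4 with hc | hc
  · -- direct Taylor estimate
    have hs5 := chr_sin_le5 x hx.le
    have hs7 := chr_sin_ge7 x hx.le
    have hc6 := chr_cos_ge6 x hx.le
    have hc4 := chr_cos_le4 x hx.le
    have hi : ∀ k : ℕ, x^k ≤ (1.4:ℝ)^k := fun k => pow_le_pow_left₀ hx.le hc k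
    -- 0 ≤ ψ and ψ ≤ ψhi
    have hpsi0 : 0 ≤ sin x - x*cos x := by nlinarith [hi 2, hi 4, mul_pos hx hx, pow_pos hx 3]
    have hpsihi : sin x - x*cos x ≤ x^3/3 - x^5/30 + x^7/720 := by nlinarith [mul_nonneg hx.le (sub_nonneg.2 hc6)]
    have hinner : 0 < π*(1/60 - x^2/720) - (2*π-6)*x^2*(1/3 - x^2/30 + (x^2)^2/720)^2 := by
      have hu1 : (0:ℝ) ≤ x^2 := sq_nonneg x
      have hu2 : x^2 ≤ 1.96 := by nlinarith [hi 2]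
      generalize x^2 = u at hu1 hu2
      have hiu : ∀ k : ℕ, u^k ≤ (1.96:ℝ)^k := fun k => pow_le_pow_left₀ hu1 hu2 k
      nlinarith [hiu 2, hiu 3, hiu 4, hiu 5, hu1, sq_nonneg u, sq_nonneg (u-1)]
    have hfac : 0 < x^5 * (π*(1/60 - x^2/720) - (2*π-6)*x^2*(1/3 - x^2/30 + (x^2)^2/720)^2) :=
      mul_pos (pow_pos hx 5) hinner
    nlinarith [hfac,
      mul_nonneg (mul_nonneg (show (0:ℝ) ≤ π by linarith) hx.le) (sub_nonneg.2 hc6),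
      mul_nonneg (show (0:ℝ) ≤ 3*π by linarith) (sub_nonneg.2 hs5),
      mul_nonneg (mul_nonneg (mul_nonneg (show (0:ℝ) ≤ 2*π-6 by linarith) hx.le)
          (sub_nonneg.2 hpsihi))
        (by nlinarith [hpsi0, hpsihi] : (0:ℝ) ≤ (x^3/3 - x^5/30 + x^7/720) + (sin x - x*cos x))]
  · -- antitone on [1.4, π/2], vanishing at π/2
    have h14 : (1.4:ℝ) ≤ π/2 := by linarith
    have hanti : StrictAntiOn
        (fun t : ℝ => π*t*(2+cos t) - 3*π*sin t - (2*π-6)*(t*(sin t - t*cos t)^2))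
        (Set.Icc 1.4 (π/2)) := by
      apply strictAntiOn_of_deriv_neg (convex_Icc _ _)
      · apply Continuous.continuousOn
        fun_prop
      · intro t ht
        rw [interior_Icc] at ht
        rw [(chr_hasDerivAt_Q π t).deriv]
        have ht1 : 1.4 < t := ht.1
        have ht2 : t ≤ 1.5707965 := by linarith [ht.2]
        have ht0 : (0:ℝ) ≤ t := by linarith
        have hs7 := chr_sin_ge7 t ht0
        have hc6 := chr_cos_ge6 t ht0
        have hc4 := chr_cos_le4 t ht0
        have lo : ∀ k : ℕ, (1.4:ℝ)^k ≤ t^k := fun k => pow_le_pow_left₀ (by norm_num) ht1.le k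
        have hi : ∀ k : ℕ, t^k ≤ (1.5707965:ℝ)^k := fun k => pow_le_pow_left₀ ht0 ht2 k
        -- lower bound for ψ and its positivity
        have hpsilo : t^3/3 - t^5/30 - t^7/5040 ≤ sin t - t*cos t := by
          nlinarith [mul_nonneg ht0 (sub_nonneg.2 hc4)]
        have hpsilo0 : (0:ℝ) ≤ t^3/3 - t^5/30 - t^7/5040 := by
          nlinarith [lo 3, hi 5, hi 7]
        have hslo0 : (0:ℝ) ≤ t - t^3/6 + t^5/120 - t^7/5040 := by
          nlinarith [lo 1, hi 3, lo 5, hi 7]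
        have hsin0 : (0:ℝ) ≤ sin t := le_trans hslo0 hs7
        have hpsi0 : (0:ℝ) ≤ sin t - t*cos t := le_trans hpsilo0 hpsilo
        -- the polynomial upper bound for Q'
        have hvq := chr_VQ_neg (t^2) (by nlinarith [lo 2]) (by nlinarith [hi 2]) π hp1 hp2
        nlinarith [hvq,
          mul_nonneg (show (0:ℝ) ≤ 2*π by linarith) (sub_nonneg.2 hc6),
          mul_nonneg (mul_nonneg (show (0:ℝ) ≤ π by linarith) ht0) (sub_nonneg.2 hs7),
          mul_nonneg (mul_nonneg (show (0:ℝ) ≤ 2*π-6 by linarith)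
              (sub_nonneg.2 hpsilo))
            (show (0:ℝ) ≤ (sin t - t*cos t) + (t^3/3 - t^5/30 - t^7/5040) by linarith),
          mul_nonneg (mul_nonneg (mul_nonneg (show (0:ℝ) ≤ 2*π-6 by linarith) (sq_nonneg t))
              hsin0) (sub_nonneg.2 hpsilo),
          mul_nonneg (mul_nonneg (mul_nonneg (show (0:ℝ) ≤ 2*π-6 by linarith) (sq_nonneg t))
              hpsilo0) (sub_nonneg.2 hs7)]
    have hend : (π*(π/2)*(2+cos (π/2)) - 3*π*sin (π/2)
        - (2*π-6)*((π/2)*(sin (π/2) - (π/2)*cos (π/2))^2)) = 0 := by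
      rw [Real.sin_pi_div_two, Real.cos_pi_div_two]; ring
    have := hanti (Set.mem_Icc.2 ⟨hc.le, hx'.le⟩) (Set.mem_Icc.2 ⟨h14, le_refl _⟩) hx'
    simp only at this
    linarith [hend ▸ this]

theorem cusa_huygens_refinement_psi (x : ℝ) (hx : 0 < x) (hx' : x < π / 2) :
    (2 + cos x) / 3 - (2 / 3 - 2 / π) * (sin x - x * cos x) < sin x / x ∧
    sin x / x < (2 + cos x) / 3 - (2 / 3 - 2 / π) * (sin x - x * cos x) ^ 2 := by
  have hπ : (0:ℝ) < π := pi_pos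
  have hx0 : x ≠ 0 := ne_of_gt hx
  have hπ0 : π ≠ 0 := ne_of_gt hπ
  constructor
  · have hP := chr_P_pos x hx hx'
    have hid : sin x / x - ((2 + cos x) / 3 - (2 / 3 - 2 / π) * (sin x - x * cos x))
        = (3*π*sin x - π*x*(2+cos x) + (2*π-6)*(x*(sin x - x*cos x))) / (3*π*x) := by
      field_simp
      ring
    have hpos : 0 < (3*π*sin x - π*x*(2+cos x) + (2*π-6)*(x*(sin x - x*cos x))) / (3*π*x) :=
      div_pos hP (by positivity)
    linarith [hid ▸ hpos]
  · have hQ := chr_Q_pos x hx hx'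
    have hid : ((2 + cos x) / 3 - (2 / 3 - 2 / π) * (sin x - x * cos x) ^ 2) - sin x / x
        = (π*x*(2+cos x) - 3*π*sin x - (2*π-6)*(x*(sin x - x*cos x)^2)) / (3*π*x) := by
      field_simp
      ring
    have hpos : 0 < (π*x*(2+cos x) - 3*π*sin x - (2*π-6)*(x*(sin x - x*cos x)^2)) / (3*π*x) :=
      div_pos hQ (by positivity)
    linarith [hid ▸ hpos]
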